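/- arXiv:1807.01140 — 2 statements merged into one kernel-verified Lean document; each statement's English description precedes it below -/
import Mathlib

section
/- Let k > 0, π > 0 and c > 0 be real constants, g(n) = kπ·n^{-1/2} + kπ·c^{-1/2}, and f_t(n) = n/(kπ) + c·n^{-1/2} + c^{1/2}. For all n₁, n₂ with (c·kπ/2)^{2/3} ≤ n₂ < n₁, one has g(n₁) < g(n₂) and f_t(n₁) > f_t(n₂); that is, on the efficient branch n ≥ (c·kπ/2)^{2/3} of the parametric curve {(f_t(n), g(n)) : n > 0}, decreasing the fleet size strictly increases travel time. -/
/-- On the efficient branch n ≥ (c kπ/2)^{2/3} of the dial-a-ride model,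
g(n) = kπ n^{-1/2} + kπ c^{-1/2} strictly decreases while
f_t(n) = n/(kπ) + c n^{-1/2} + c^{1/2} strictly increases. -/
theorem dar_efficient_branch (k π c : ℝ) (hk : 0 < k) (hπ : 0 < π) (hc : 0 < c)
    (n₁ n₂ : ℝ) (h₂ : (c * k * π / 2) ^ ((2:ℝ)/3) ≤ n₂) (h₁₂ : n₂ < n₁) :
    (k * π * n₁ ^ (-(1/2) : ℝ) + k * π * c ^ (-(1/2) : ℝ) <
      k * π * n₂ ^ (-(1/2) : ℝ) + k * π * c ^ (-(1/2) : ℝ)) ∧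
    (n₁ / (k * π) + c * n₁ ^ (-(1/2) : ℝ) + c ^ ((1:ℝ)/2) >
      n₂ / (k * π) + c * n₂ ^ (-(1/2) : ℝ) + c ^ ((1:ℝ)/2)) := by
  have ht : (0:ℝ) < c * k * π / 2 := by positivity
  have hn₂ : 0 < n₂ := lt_of_lt_of_le (Real.rpow_pos_of_pos ht _) h₂
  have hn₁ : 0 < n₁ := hn₂.trans h₁₂
  have hkπ : 0 < k * π := by positivity
  constructor
  · have := Real.rpow_lt_rpow_of_neg hn₂ h₁₂ (by norm_num : (-(1/2):ℝ) < 0)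
    nlinarith
  · -- strict monotonicity of F x = x/(kπ) + c x^(-1/2) on [n₂, n₁]
    have key : StrictMonoOn (fun x : ℝ => x / (k * π) + c * x ^ (-(1/2) : ℝ))
        (Set.Icc n₂ n₁) := by
      apply strictMonoOn_of_deriv_pos (convex_Icc _ _)
      · apply ContinuousOn.add
        · exact (continuousOn_id.div_const _)
        · exact continuousOn_const.mul (continuousOn_id.rpow_const
            (fun x hx => Or.inl (ne_of_gt (lt_of_lt_of_le hn₂ hx.1))))
      · intro x hx
        rw [interior_Icc] at hx
        have hx0 : 0 < x := hn₂.trans hx.1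
        have hderiv : HasDerivAt (fun x : ℝ => x / (k * π) + c * x ^ (-(1/2) : ℝ))
            (1 / (k * π) + c * (-(1/2) * x ^ (-(1/2) - 1 : ℝ))) x := by
          have h1 : HasDerivAt (fun x : ℝ => x / (k * π)) (1 / (k * π)) x := by
            simpa using (hasDerivAt_id x).div_const (k * π)
          have h2 : HasDerivAt (fun x : ℝ => x ^ (-(1/2) : ℝ))
              (-(1/2) * x ^ (-(1/2) - 1 : ℝ)) x :=
            Real.hasDerivAt_rpow_const (Or.inl (ne_of_gt hx0))
          exact h1.add (h2.const_mul c)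
        rw [hderiv.deriv]
        -- need: 1/(kπ) - (c/2) x^(-3/2) > 0
        have hxgt : (c * k * π / 2) ^ ((2:ℝ)/3) < x := lt_of_le_of_lt h₂ hx.1
        have hpow : c * k * π / 2 < x ^ ((3:ℝ)/2) := by
          have := Real.rpow_lt_rpow (Real.rpow_pos_of_pos ht ((2:ℝ)/3)).le hxgt
            (by norm_num : (0:ℝ) < 3/2)
          rwa [← Real.rpow_mul ht.le, show ((2:ℝ)/3 * (3/2)) = 1 by norm_num,
            Real.rpow_one] at this
        have hxp : 0 < x ^ ((3:ℝ)/2) := Real.rpow_pos_of_pos hx0 _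
        have hinv : x ^ (-(1/2) - 1 : ℝ) = (x ^ ((3:ℝ)/2))⁻¹ := by
          rw [show (-(1/2) - 1 : ℝ) = -(3/2) by norm_num, Real.rpow_neg hx0.le]
        rw [hinv]
        have h1 : c * (x ^ ((3:ℝ)/2))⁻¹ < c * (c * k * π / 2)⁻¹ :=
          mul_lt_mul_of_pos_left (by exact inv_strictAnti₀ ht hpow) hc
        have h2 : c * (c * k * π / 2)⁻¹ = 2 / (k * π) := by
          field_simp
        rw [h2] at h1
        have h3 : c * (-(1/2) * (x ^ ((3:ℝ)/2))⁻¹) = -(c * (x ^ ((3:ℝ)/2))⁻¹)/2 := by ring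
        have h4 : (2:ℝ)/(k*π) = 2*(1/(k*π)) := by ring
        linarith
    have := key (Set.left_mem_Icc.2 h₁₂.le) (Set.right_mem_Icc.2 h₁₂.le) h₁₂
    simp only at this
    linarith
end

section
/- Let k > 0, π > 0 and n > 0 be real numbers. If real numbers n₀₀, n₀₁, n₀₂, n₁₁, n₁₀, n₂₀ satisfy (i) n₀₀ + n₀₁ = n; (ii) π·n₀₁/n = n₀₂·n^{1/2}/k; (iii) π·n₀₁/n = n₁₁·n^{1/2}/k; (iv) π·n₀₁/n = n₂₀·√2/k; (v) π·n₀₀/n = n₁₀/k; (vi) n₀₁·n^{1/2}/k + n₂₀·√2/k = n₁₀/k, then necessarily, with D = 2kπ + n^{3/2}: n₀₀ = n(kπ + n^{3/2})/D, n₀₁ = kπ·n/D, n₀₂ = n₁₁ = (kπ)²/(n^{1/2}·D), n₁₀ = kπ(kπ + n^{3/2})/D, and n₂₀ = (kπ)²/(√2·D). In particular the linear system has a unique solution. -/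
/-- Any solution of the six steady-state equations (18) and (20) of the shared-taxi
(type b) model with c = 2 must be given by the explicit formulas (21):
the linear system has a unique solution. -/
theorem shared_taxi_solution_unique (k π n n₀₀ n₀₁ n₀₂ n₁₁ n₁₀ n₂₀ : ℝ)
    (hk : 0 < k) (hπ : 0 < π) (hn : 0 < n)
    (h1 : n₀₀ + n₀₁ = n)
    (h2 : π * n₀₁ / n = n₀₂ * n ^ ((1:ℝ)/2) / k)
    (h3 : π * n₀₁ / n = n₁₁ * n ^ ((1:ℝ)/2) / k)
    (h4 : π * n₀₁ / n = n₂₀ * Real.sqrt 2 / k)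
    (h5 : π * n₀₀ / n = n₁₀ / k)
    (h6 : n₀₁ * n ^ ((1:ℝ)/2) / k + n₂₀ * Real.sqrt 2 / k = n₁₀ / k) :
    n₀₀ = n * (k * π + n ^ ((3:ℝ)/2)) / (2 * k * π + n ^ ((3:ℝ)/2)) ∧
    n₀₁ = k * π * n / (2 * k * π + n ^ ((3:ℝ)/2)) ∧
    n₀₂ = (k * π) ^ 2 / (n ^ ((1:ℝ)/2) * (2 * k * π + n ^ ((3:ℝ)/2))) ∧
    n₁₁ = (k * π) ^ 2 / (n ^ ((1:ℝ)/2) * (2 * k * π + n ^ ((3:ℝ)/2))) ∧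
    n₁₀ = k * π * (k * π + n ^ ((3:ℝ)/2)) / (2 * k * π + n ^ ((3:ℝ)/2)) ∧
    n₂₀ = (k * π) ^ 2 / (Real.sqrt 2 * (2 * k * π + n ^ ((3:ℝ)/2))) := by
  have hs : (0:ℝ) < n ^ ((1:ℝ)/2) := Real.rpow_pos_of_pos hn _
  have ht : n ^ ((3:ℝ)/2) = n * n ^ ((1:ℝ)/2) := by
    rw [show (3:ℝ)/2 = 1 + 1/2 by norm_num, Real.rpow_add hn, Real.rpow_one]
  have hq : (0:ℝ) < Real.sqrt 2 := by positivity
  set s := n ^ ((1:ℝ)/2) with hsdef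
  set q := Real.sqrt 2 with hqdef
  rw [ht]
  have hD : (0:ℝ) < 2 * k * π + n * s := by positivity
  field_simp at h2 h3 h4 h5 h6 ⊢
  have key : n₀₁ * (2 * k * π + n * s) = k * π * n := by
    linear_combination n * h6 + h4 - h5 + k * π * h1
  have g0 : n₀₀ * (2 * k * π + n * s) = n * (k * π + n * s) := by
    linear_combination (2 * k * π + n * s) * h1 - key
  refine ⟨by linear_combination g0, by linear_combination key, ?_, ?_, ?_, ?_⟩
  · have := mul_left_cancel₀ hn.ne'
      (show n * (n₀₂ * (s * (2 * k * π + n * s))) = n * (k * π) ^ 2 by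
        linear_combination (-(2 * k * π + n * s)) * h2 + k * π * key)
    linear_combination this
  · have := mul_left_cancel₀ hn.ne'
      (show n * (n₁₁ * (s * (2 * k * π + n * s))) = n * (k * π) ^ 2 by
        linear_combination (-(2 * k * π + n * s)) * h3 + k * π * key)
    linear_combination this
  · have := mul_left_cancel₀ hn.ne'
      (show n * (n₁₀ * (2 * k * π + n * s)) = n * (k * π * (k * π + n * s)) by
        linear_combination (-(2 * k * π + n * s)) * h5 + k * π * g0)
    linear_combination this
  · have := mul_left_cancel₀ hn.ne'
      (show n * (n₂₀ * (q * (2 * k * π + n * s))) = n * (k * π) ^ 2 by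
        linear_combination (-(2 * k * π + n * s)) * h4 + k * π * key)
    linear_combination this
end
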